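/- Let w : I → ℕ be a position on a finite index set I and suppose i₀ ∈ I satisfies w(i₀) = 0. Let w' be the restriction of w to I∖{i₀}. Then for every e ∈ ℕ and every b ≥ 1, δ_e^(b)(w) = 2 · δ_e^(b)(w'). In particular, removing a zero element from a position decreases P(δ_e^(b)) by exactly 1. -/

import Mathlib

open Finset

/-- The weight of a subposition `S` of the position `w : I → ℕ`. -/
def wtS {I : Type*} [Fintype I] [DecidableEq I] (w : I → ℕ) (S : Finset I) : ℕ :=
  ∑ i ∈ S, w i

/-- The Saks–Werman statistic `δ_e(w) = ∑_{S ⊆ I, ε(S) ≥ e} (-1)^{wt S}` where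
`ε(S) = wt(I \ S) - wt(S)`. -/
def delta {I : Type*} [Fintype I] [DecidableEq I] (w : I → ℕ) (e : ℕ) : ℤ :=
  ∑ S ∈ Finset.univ.filter
      (fun S : Finset I => (e : ℤ) ≤ (wtS w Sᶜ : ℤ) - (wtS w S : ℤ)),
    (-1) ^ (wtS w S)

/-- The iterated statistic `δ_e^(b)`: `δ_e^(1) = δ_e` and for `b ≥ 2`,
`δ_e^(b) = ∑_{t ≥ 0} δ_{e+2t}^(b-1)`, a finite sum since `δ_d = 0` for `d > wt(I)`
(so summing `t` over `0, …, wt(I)` suffices).  (The value at `b = 0` is junk.) -/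
def deltaIt {I : Type*} [Fintype I] [DecidableEq I] (w : I → ℕ) : ℕ → ℕ → ℤ
  | 0, e => delta w e
  | 1, e => delta w e
  | (b+2), e => ∑ t ∈ Finset.range ((∑ i, w i) + 1), deltaIt w (b+1) (e + 2*t)

section aux
variable {I : Type*} [Fintype I] [DecidableEq I] (w : I → ℕ) (i₀ : I)

lemma total_eq (hi₀ : w i₀ = 0) : (∑ i, w i) = ∑ x : {x : I // x ≠ i₀}, w x := by
  rw [← Finset.sum_subtype (s := Finset.univ.filter (· ≠ i₀))
    (fun x => by simp) (f := w)]
  rw [Finset.filter_ne', Finset.sum_erase _ hi₀]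

lemma wtS_compl (S : Finset I) : (wtS w Sᶜ : ℤ) = (∑ i, w i : ℕ) - wtS w S := by
  have : wtS w Sᶜ + wtS w S = ∑ i, w i := by
    rw [wtS, wtS, Finset.sum_compl_add_sum]
  omega

lemma delta_erase (hi₀ : w i₀ = 0) (e : ℕ) :
    delta w e = 2 * delta (fun x : {x : I // x ≠ i₀} => w x) e := by
  classical
  set J := {x : I // x ≠ i₀}
  set w' : J → ℕ := fun x => w x
  set T : ℕ := ∑ i, w i with hT
  have hT' : (∑ x : J, w' x) = T := (total_eq w i₀ hi₀).symm
  rw [delta, delta, Finset.sum_filter, Finset.sum_filter]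
  -- define F on Finset I
  set F : Finset I → ℤ := fun S =>
    if (e : ℤ) ≤ (wtS w Sᶜ : ℤ) - (wtS w S : ℤ) then (-1 : ℤ) ^ (wtS w S) else 0 with hF
  have hnotmem : i₀ ∉ Finset.univ.erase i₀ := Finset.notMem_erase _ _
  have huniv : (Finset.univ : Finset (Finset I)) = (insert i₀ (Finset.univ.erase i₀)).powerset := by
    rw [Finset.insert_erase (mem_univ i₀), Finset.powerset_univ]
  have hFins : ∀ t ∈ (Finset.univ.erase i₀).powerset, F (insert i₀ t) = F t := by
    intro t ht
    have hi₀t : i₀ ∉ t := fun h => hnotmem (Finset.mem_powerset.mp ht h)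
    have hwt : wtS w (insert i₀ t) = wtS w t := by
      rw [wtS, Finset.sum_insert hi₀t, hi₀, zero_add]; rfl
    simp only [hF, wtS_compl w, hwt]
  have step1 : (∑ S : Finset I, F S) = 2 * ∑ t ∈ (Finset.univ.erase i₀).powerset, F t := by
    rw [huniv, Finset.sum_powerset_insert hnotmem, Finset.sum_congr rfl hFins, two_mul]
  rw [step1]
  congr 1
  -- bijection between powerset of erase and Finset J
  symm
  refine Finset.sum_nbij' (fun S : Finset J => S.map (Function.Embedding.subtype (· ≠ i₀)))
    (fun t => t.subtype (· ≠ i₀)) ?_ ?_ ?_ ?_ ?_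
  · intro S _
    rw [Finset.mem_powerset]
    intro x hx
    obtain ⟨y, _, rfl⟩ := Finset.mem_map.mp hx
    exact Finset.mem_erase.mpr ⟨y.2, Finset.mem_univ _⟩
  · intro t _; exact Finset.mem_univ _
  · intro S _
    ext x
    simp only [Finset.mem_subtype, Finset.mem_map, Function.Embedding.coe_subtype,
      Subtype.exists, Subtype.coe_eta]
    constructor
    · rintro ⟨a, ha, h, rfl⟩; exact h
    · intro h; exact ⟨x, x.2, h, rfl⟩
  · intro t ht
    exact Finset.subtype_map_of_mem fun x hx =>
      (Finset.mem_erase.mp (Finset.mem_powerset.mp ht hx)).1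
  · intro S _
    have hwt : wtS w' S = wtS w (S.map (Function.Embedding.subtype (· ≠ i₀))) := by
      rw [wtS, wtS, Finset.sum_map]; rfl
    simp only [hF, wtS_compl w, wtS_compl w', hT', hwt, hT]

lemma deltaIt_erase (hi₀ : w i₀ = 0) (b : ℕ) (e : ℕ) :
    deltaIt w (b+1) e = 2 * deltaIt (fun x : {x : I // x ≠ i₀} => w x) (b+1) e := by
  induction b generalizing e with
  | zero => exact delta_erase w i₀ hi₀ e
  | succ b ih =>
    show (∑ t ∈ Finset.range ((∑ i, w i) + 1), deltaIt w (b+1) (e + 2*t)) = _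
    rw [show deltaIt (fun x : {x : I // x ≠ i₀} => w x) (b+2) e =
      ∑ t ∈ Finset.range ((∑ x : {x : I // x ≠ i₀}, w x) + 1),
        deltaIt (fun x : {x : I // x ≠ i₀} => w x) (b+1) (e + 2*t) from rfl]
    rw [← total_eq w i₀ hi₀, Finset.mul_sum]
    exact Finset.sum_congr rfl fun t _ => ih (e + 2*t)

end aux

/-- removing an element of weight `0` from a position halves every
statistic `δ_e^(b)` (`b ≥ 1`); in particular it decreases `P(δ_e^(b))` by exactly `1`. -/
theorem deltaIt_erase_zero
    {I : Type*} [Fintype I] [DecidableEq I] (w : I → ℕ)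
    (i₀ : I) (hi₀ : w i₀ = 0) (e b : ℕ) (hb : 1 ≤ b) :
    deltaIt w b e = 2 * deltaIt (fun x : {x : I // x ≠ i₀} => w x) b e
    ∧ emultiplicity (2 : ℤ) (deltaIt w b e)
        = emultiplicity (2 : ℤ) (deltaIt (fun x : {x : I // x ≠ i₀} => w x) b e) + 1 := by
  obtain ⟨b, rfl⟩ := Nat.exists_eq_add_of_le hb
  rw [add_comm]
  have h := deltaIt_erase w i₀ hi₀ b e
  refine ⟨h, ?_⟩
  rw [h, emultiplicity_mul Int.prime_two]
  have h2 : emultiplicity (2 : ℤ) 2 = 1 :=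
    (FiniteMultiplicity.of_prime_left Int.prime_two (by norm_num)).emultiplicity_self
  rw [h2, add_comm]
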